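/- Consider a run of the PRM protocol on n ≥ 1 agents with input color assignment χ : Fin n → Fin k that has a unique relative-majority color μ (i.e., strictly more agents have input color μ than any other color), under a weakly fair schedule σ. Then all agents eventually output μ forever: there exists a time T such that for all t ≥ T and all agents a, the out value of agent a at time t equals μ. -/

import Mathlib

/-- The state of an agent in the PRM protocol: a bra-ket `(bra, ket)` together
with an output value `out`, all colors in `Fin k`. -/
structure AgentState (k : ℕ) where
  bra : Fin k
  ket : Fin k
  out : Fin k

/-- The weight of a bra-ket `(i, j)`: `k` if `i = j`, and `(j - i) mod k` otherwise. -/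
def wt (k : ℕ) (i j : Fin k) : ℕ :=
  if i = j then k else (((j : ℤ) - (i : ℤ)) % (k : ℤ)).toNat

/-- One interaction of the PRM protocol between two agents: they exchange their
kets if this strictly decreases the minimum weight of their two bra-kets; then,
if either agent has a bra-ket of the form `(i, i)`, both set their out value to `i`. -/
def interact {k : ℕ} (s t : AgentState k) : AgentState k × AgentState k :=
  let s1 : AgentState k :=
    if min (wt k s.bra t.ket) (wt k t.bra s.ket) < min (wt k s.bra s.ket) (wt k t.bra t.ket)
      then ⟨s.bra, t.ket, s.out⟩ else s
  let t1 : AgentState k :=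
    if min (wt k s.bra t.ket) (wt k t.bra s.ket) < min (wt k s.bra s.ket) (wt k t.bra t.ket)
      then ⟨t.bra, s.ket, t.out⟩ else t
  if s1.bra = s1.ket then (⟨s1.bra, s1.ket, s1.bra⟩, ⟨t1.bra, t1.ket, s1.bra⟩)
  else if t1.bra = t1.ket then (⟨s1.bra, s1.ket, t1.bra⟩, ⟨t1.bra, t1.ket, t1.bra⟩)
  else (s1, t1)

/-- The run of the PRM protocol on `n` agents with input colors `χ` under
schedule `σ`: `run χ σ t a` is the state of agent `a` at time `t`. -/
def run {k n : ℕ} (χ : Fin n → Fin k) (σ : ℕ → Fin n × Fin n) :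
    ℕ → Fin n → AgentState k
  | 0 => fun a => ⟨χ a, χ a, χ a⟩
  | t + 1 => fun a =>
    let st := run χ σ t
    let p := (σ t).1
    let q := (σ t).2
    if a = p then (interact (st p) (st q)).1
    else if a = q then (interact (st p) (st q)).2
    else st a


lemma key_arith (k a b a' b' : ℤ) (ha1 : 1 ≤ a) (ha2 : a ≤ k) (hb1 : 1 ≤ b) (hb2 : b ≤ k)
    (ha'1 : 1 ≤ a') (ha'2 : a' ≤ k) (hb'1 : 1 ≤ b') (hb'2 : b' ≤ k)
    (hdvd : k ∣ (a + b) - (a' + b')) (hmin : min a' b' < min a b) :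
    (a' + b' + k = a + b) ∨ (a' + b' = a + b ∧ a^2 + b^2 < a'^2 + b'^2) := by
  obtain ⟨m, hm⟩ := hdvd
  have hk : 1 ≤ k := le_trans ha1 ha2
  have hm1 : m < 2 := by nlinarith
  have hm2 : -2 < m := by nlinarith
  interval_cases m
  · -- a' + b' = a + b + k : impossible
    exfalso
    rcases le_total a' b' with h | h <;> rcases le_total a b with h2 | h2 <;>
      simp [min_eq_left, min_eq_right, h, h2] at hmin <;> omega
  · -- equal sums
    right
    have hsum : a' + b' = a + b := by omega
    refine ⟨hsum, ?_⟩
    rcases le_total a' b' with h | h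
    · have h1 : a' < a := by rcases le_total a b with h2 | h2 <;> simp [h, h2, min_def] at hmin <;> omega
      have h2 : a' < b := by rcases le_total a b with h2 | h2 <;> simp [h, h2, min_def] at hmin <;> omega
      nlinarith [mul_pos (show (0:ℤ) < a - a' by omega) (show (0:ℤ) < b - a' by omega)]
    · have h1 : b' < a := by rcases le_total a b with h2 | h2 <;> simp [h, h2, min_def] at hmin <;> omega
      have h2 : b' < b := by rcases le_total a b with h2 | h2 <;> simp [h, h2, min_def] at hmin <;> omega
      nlinarith [mul_pos (show (0:ℤ) < a - b' by omega) (show (0:ℤ) < b - b' by omega)]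
  · left; omega


namespace PRM

/-- cyclic forward distance from `i` to `j` (0 when equal) -/
def dist {k : ℕ} (i j : Fin k) : ℕ :=
  if i.val ≤ j.val then j.val - i.val else k + j.val - i.val

lemma dist_self {k : ℕ} (i : Fin k) : dist i i = 0 := by simp [dist]

lemma dist_lt {k : ℕ} (i j : Fin k) : dist i j < k := by
  have hi := i.isLt; have hj := j.isLt
  unfold dist; split <;> omega

lemma dist_pos {k : ℕ} {i j : Fin k} (h : i ≠ j) : 0 < dist i j := by
  have : i.val ≠ j.val := fun hh => h (Fin.ext hh)
  have hi := i.isLt; have hj := j.isLt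
  unfold dist; split <;> omega

lemma dist_eq_zero_iff {k : ℕ} {i j : Fin k} : dist i j = 0 ↔ i = j := by
  constructor
  · intro h; by_contra hne; have := dist_pos hne; omega
  · intro h; subst h; exact dist_self i

lemma wt_eq {k : ℕ} (i j : Fin k) : wt k i j = if i = j then k else dist i j := by
  unfold wt dist
  split
  · rfl
  · rename_i hne
    have hi := i.isLt; have hj := j.isLt
    have hk : 0 < k := Nat.pos_of_ne_zero (by rintro rfl; exact absurd i.isLt (by omega))
    have hvne : i.val ≠ j.val := fun hh => hne (Fin.ext hh)
    by_cases hle : i.val ≤ j.val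
    · rw [if_pos hle]
      have h0 : (0:ℤ) ≤ (j:ℤ) - (i:ℤ) := by
        have := (Int.ofNat_le.mpr hle); push_cast at this ⊢; omega
      have h1 : ((j:ℤ) - (i:ℤ)) < (k:ℤ) := by
        have := Int.ofNat_lt.mpr hj; push_cast at this ⊢; omega
      rw [Int.emod_eq_of_lt h0 h1]
      omega
    · rw [if_neg hle]
      have key : ((j:ℤ) - (i:ℤ)) % (k:ℤ) = ((j:ℤ) - (i:ℤ) + k) % (k:ℤ) := by
        conv_rhs => rw [show (j:ℤ) - (i:ℤ) + k = (j:ℤ) - (i:ℤ) + k * 1 by ring]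
        rw [Int.add_mul_emod_self_left]
      rw [key]
      have h0 : (0:ℤ) ≤ (j:ℤ) - (i:ℤ) + k := by push_cast; omega
      have h1 : (j:ℤ) - (i:ℤ) + k < (k:ℤ) := by push_cast; omega
      rw [Int.emod_eq_of_lt h0 h1]
      omega

lemma wt_diag {k : ℕ} (i : Fin k) : wt k i i = k := by simp [wt_eq]

lemma wt_ne {k : ℕ} {i j : Fin k} (h : i ≠ j) : wt k i j = dist i j := by simp [wt_eq, h]

lemma wt_pos {k : ℕ} (hk : 0 < k) (i j : Fin k) : 0 < wt k i j := by
  rw [wt_eq]; split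
  · exact hk
  · exact dist_pos (by assumption)

lemma wt_le {k : ℕ} (i j : Fin k) : wt k i j ≤ k := by
  rw [wt_eq]; split
  · exact le_refl k
  · exact (dist_lt i j).le

/-- congruence: wt ≡ j - i mod k -/
lemma wt_emod {k : ℕ} (i j : Fin k) : ((wt k i j : ℤ)) % k = ((j:ℤ) - i) % k := by
  have hi := i.isLt; have hj := j.isLt
  rw [wt_eq]; split
  · rename_i h; subst h; simp
  · rename_i hne
    unfold dist
    by_cases hle : i.val ≤ j.val
    · rw [if_pos hle]
      have h1 : ((j.val - i.val : ℕ) : ℤ) = (j:ℤ) - i := by push_cast; omega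
      rw [h1]
    · rw [if_neg hle]
      have h1 : ((k + j.val - i.val : ℕ) : ℤ) = (j:ℤ) - i + k := by push_cast; omega
      rw [h1]
      conv_lhs => rw [show (j:ℤ) - (i:ℤ) + k = (j:ℤ) - (i:ℤ) + k * 1 by ring]
      rw [Int.add_mul_emod_self_left]

lemma val_succ {k : ℕ} [NeZero k] (c : Fin k) : ((c + 1 : Fin k)).val = (c.val + 1) % k := by
  rw [Fin.add_def, Fin.val_one']
  show (c.val + 1 % k) % k = (c.val + 1) % k
  conv_rhs => rw [Nat.add_mod, Nat.mod_eq_of_lt c.isLt]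

lemma dist_succ {k : ℕ} [NeZero k] (hk2 : 2 ≤ k) {b c : Fin k} (h : b ≠ c + 1) :
    dist b (c + 1) = dist b c + 1 := by
  have hb := b.isLt; have hc := c.isLt
  have hv : b.val ≠ (c+1 : Fin k).val := fun hh => h (Fin.ext hh)
  have hs := val_succ c
  unfold dist
  rcases Nat.lt_or_ge (c.val + 1) k with h1 | h1
  · have : ((c.val + 1) % k) = c.val + 1 := Nat.mod_eq_of_lt h1
    split <;> split <;> omega
  · have hck : c.val = k - 1 := by omega
    have : ((c.val + 1) % k) = 0 := by rw [hck]; simp [Nat.sub_add_cancel (by omega : 1 ≤ k)]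
    split <;> split <;> omega

lemma dist_succ_self {k : ℕ} [NeZero k] (hk2 : 2 ≤ k) (c : Fin k) :
    dist (c + 1) c = k - 1 := by
  have hc := c.isLt
  have hs := val_succ c
  unfold dist
  rcases Nat.lt_or_ge (c.val + 1) k with h1 | h1
  · have : ((c.val + 1) % k) = c.val + 1 := Nat.mod_eq_of_lt h1
    split <;> omega
  · have hck : c.val = k - 1 := by omega
    have : ((c.val + 1) % k) = 0 := by rw [hck]; simp [Nat.sub_add_cancel (by omega : 1 ≤ k)]
    split <;> omega

lemma dist_right_inj {k : ℕ} {b x y : Fin k} (h : dist b x = dist b y) : x = y := by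
  have hb := b.isLt; have hx := x.isLt; have hy := y.isLt
  apply Fin.ext
  unfold dist at h
  split at h <;> split at h <;> omega

lemma dist_chain {k : ℕ} {i c j : Fin k} (h : dist i c ≤ dist i j) :
    dist c j = dist i j - dist i c := by
  have hi := i.isLt; have hc := c.isLt; have hj := j.isLt
  unfold dist at *
  split at h <;> split at h <;> split <;> omega
section Interact
variable {k : ℕ} (s t : AgentState k)

/-- the swap condition -/
def swapc : Prop :=
  min (wt k s.bra t.ket) (wt k t.bra s.ket) < min (wt k s.bra s.ket) (wt k t.bra t.ket)

instance : Decidable (swapc s t) := by unfold swapc; infer_instance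

lemma interact_def : interact s t =
    (if h : swapc s t then
      (if s.bra = t.ket then ((⟨s.bra, t.ket, s.bra⟩ : AgentState k), (⟨t.bra, s.ket, s.bra⟩ : AgentState k))
       else if t.bra = s.ket then ((⟨s.bra, t.ket, t.bra⟩ : AgentState k), (⟨t.bra, s.ket, t.bra⟩ : AgentState k))
       else ((⟨s.bra, t.ket, s.out⟩ : AgentState k), (⟨t.bra, s.ket, t.out⟩ : AgentState k)))
     else
      (if s.bra = s.ket then ((⟨s.bra, s.ket, s.bra⟩ : AgentState k), (⟨t.bra, t.ket, s.bra⟩ : AgentState k))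
       else if t.bra = t.ket then ((⟨s.bra, s.ket, t.bra⟩ : AgentState k), (⟨t.bra, t.ket, t.bra⟩ : AgentState k))
       else (s, t))) := by
  unfold interact swapc
  split_ifs <;> simp_all

lemma interact_bra1 : (interact s t).1.bra = s.bra := by
  rw [interact_def]; split_ifs <;> simp

lemma interact_bra2 : (interact s t).2.bra = t.bra := by
  rw [interact_def]; split_ifs <;> simp

lemma interact_ket_swap (h : swapc s t) :
    (interact s t).1.ket = t.ket ∧ (interact s t).2.ket = s.ket := by
  rw [interact_def]; split_ifs <;> simp_all

lemma interact_ket_stay (h : ¬ swapc s t) :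
    (interact s t).1.ket = s.ket ∧ (interact s t).2.ket = t.ket := by
  rw [interact_def]; split_ifs <;> simp_all

lemma interact_stay_diag1 (h : ¬ swapc s t) (hs : s.bra = s.ket) :
    interact s t = (⟨s.bra, s.ket, s.bra⟩, ⟨t.bra, t.ket, s.bra⟩) := by
  rw [interact_def]; split_ifs <;> simp_all

lemma interact_stay_diag2 (h : ¬ swapc s t) (hs : s.bra ≠ s.ket) (ht : t.bra = t.ket) :
    interact s t = (⟨s.bra, s.ket, t.bra⟩, ⟨t.bra, t.ket, t.bra⟩) := by
  rw [interact_def]; split_ifs <;> simp_all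

lemma interact_stay_nodiag (h : ¬ swapc s t) (hs : s.bra ≠ s.ket) (ht : t.bra ≠ t.ket) :
    interact s t = (s, t) := by
  rw [interact_def]; split_ifs <;> simp_all

/-- if the swap fires, the two kets differ -/
lemma swapc_ket_ne (h : swapc s t) : s.ket ≠ t.ket := by
  intro he
  unfold swapc at h
  rw [he] at h
  omega

end Interact

section Run
variable {k n : ℕ} (χ : Fin n → Fin k) (σ : ℕ → Fin n × Fin n)

lemma run_succ (t : ℕ) (a : Fin n) :
    run χ σ (t+1) a =
      if a = (σ t).1 then (interact (run χ σ t (σ t).1) (run χ σ t (σ t).2)).1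
      else if a = (σ t).2 then (interact (run χ σ t (σ t).1) (run χ σ t (σ t).2)).2
      else run χ σ t a := rfl

lemma run_bra (t : ℕ) (a : Fin n) : (run χ σ t a).bra = χ a := by
  induction t generalizing a with
  | zero => rfl
  | succ t ih =>
    rw [run_succ]
    split_ifs with h1 h2
    · rw [interact_bra1, ih, h1]
    · rw [interact_bra2, ih, h2]
    · exact ih a

lemma run_ket_perm (t : ℕ) : ∃ τ : Equiv.Perm (Fin n), ∀ a, (run χ σ t a).ket = χ (τ a) := by
  induction t with
  | zero => exact ⟨Equiv.refl _, fun a => rfl⟩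
  | succ t ih =>
    obtain ⟨τ, hτ⟩ := ih
    set p := (σ t).1
    set q := (σ t).2
    by_cases hsw : swapc (run χ σ t p) (run χ σ t q)
    · refine ⟨(Equiv.swap p q).trans τ, fun a => ?_⟩
      rw [run_succ]
      split_ifs with h1 h2
      · rw [(interact_ket_swap _ _ hsw).1, hτ q]
        subst h1; rw [Equiv.trans_apply, Equiv.swap_apply_left]
      · rw [(interact_ket_swap _ _ hsw).2, hτ p]
        subst h2; rw [Equiv.trans_apply, Equiv.swap_apply_right]
      · rw [hτ a, Equiv.trans_apply, Equiv.swap_apply_of_ne_of_ne h1 h2]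
    · refine ⟨τ, fun a => ?_⟩
      rw [run_succ]
      split_ifs with h1 h2
      · rw [(interact_ket_stay _ _ hsw).1, hτ p, h1]
      · rw [(interact_ket_stay _ _ hsw).2, hτ q, h2]
      · exact hτ a

lemma card_filter_perm {α : Type*} [Fintype α] [DecidableEq α] {β : Type*} [DecidableEq β]
    (f : α → β) (τ : Equiv.Perm α) (c : β) :
    (Finset.univ.filter fun a => f (τ a) = c).card = (Finset.univ.filter fun a => f a = c).card := by
  apply Finset.card_bij (fun a _ => τ a)
  · intro a ha; simp only [Finset.mem_filter, Finset.mem_univ, true_and] at ha ⊢; exact ha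
  · intro a _ b _ h; exact τ.injective h
  · intro b hb
    refine ⟨τ.symm b, ?_, by simp⟩
    simp only [Finset.mem_filter, Finset.mem_univ, true_and] at hb ⊢
    simpa using hb

lemma run_ket_count (t : ℕ) (c : Fin k) :
    (Finset.univ.filter fun a => (run χ σ t a).ket = c).card =
    (Finset.univ.filter fun a => χ a = c).card := by
  obtain ⟨τ, hτ⟩ := run_ket_perm χ σ t
  have hset : (Finset.univ.filter fun a => (run χ σ t a).ket = c) =
      (Finset.univ.filter fun a => χ (τ a) = c) := by
    ext a; simp [hτ a]
  rw [hset]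
  exact card_filter_perm χ τ c

end Run

lemma wt_modeq {k : ℕ} (i j : Fin k) : ((wt k i j : ℤ)) ≡ (j:ℤ) - i [ZMOD k] := by
  have := wt_emod i j
  unfold Int.ModEq
  push_cast
  exact this

lemma swapc_consequence {k : ℕ} (hk : 0 < k) (s t : AgentState k) (h : swapc s t) :
    (wt k s.bra t.ket + wt k t.bra s.ket + k = wt k s.bra s.ket + wt k t.bra t.ket) ∨
    (wt k s.bra t.ket + wt k t.bra s.ket = wt k s.bra s.ket + wt k t.bra t.ket ∧
     (wt k s.bra s.ket)^2 + (wt k t.bra t.ket)^2 <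
       (wt k s.bra t.ket)^2 + (wt k t.bra s.ket)^2) := by
  set a := wt k s.bra s.ket with ha
  set b := wt k t.bra t.ket with hb
  set a' := wt k s.bra t.ket with ha'
  set b' := wt k t.bra s.ket with hb'
  have hcong : ((a:ℤ) + b) ≡ ((a':ℤ) + b') [ZMOD k] := by
    have h1 := wt_modeq s.bra s.ket
    have h2 := wt_modeq t.bra t.ket
    have h3 := wt_modeq s.bra t.ket
    have h4 := wt_modeq t.bra s.ket
    calc ((a:ℤ) + b) ≡ ((s.ket:ℤ) - s.bra) + ((t.ket:ℤ) - t.bra) [ZMOD k] := h1.add h2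
    _ = ((t.ket:ℤ) - s.bra) + ((s.ket:ℤ) - t.bra) := by ring
    _ ≡ ((a':ℤ) + b') [ZMOD k] := (h3.add h4).symm
  have hdvd : (k:ℤ) ∣ ((a:ℤ) + b) - ((a':ℤ) + b') := Int.ModEq.dvd hcong.symm
  have hmin : min (a':ℤ) b' < min (a:ℤ) b := by
    have : min a' b' < min a b := h
    push_cast [← Nat.cast_min]
    exact_mod_cast this
  have := key_arith k a b a' b'
    (by exact_mod_cast wt_pos hk s.bra s.ket) (by exact_mod_cast wt_le s.bra s.ket)
    (by exact_mod_cast wt_pos hk t.bra t.ket) (by exact_mod_cast wt_le t.bra t.ket)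
    (by exact_mod_cast wt_pos hk s.bra t.ket) (by exact_mod_cast wt_le s.bra t.ket)
    (by exact_mod_cast wt_pos hk t.bra s.ket) (by exact_mod_cast wt_le t.bra s.ket)
    hdvd hmin
  rcases this with h1 | ⟨h1, h2⟩
  · left; exact_mod_cast h1
  · right; constructor
    · exact_mod_cast h1
    · exact_mod_cast h2

section Freeze
variable {k n : ℕ} (χ : Fin n → Fin k) (σ : ℕ → Fin n × Fin n)

/-- total weight -/
def Sw (t : ℕ) : ℕ := ∑ a : Fin n, wt k (χ a) ((run χ σ t a).ket)

/-- total squared weight -/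
def Qw (t : ℕ) : ℕ := ∑ a : Fin n, (wt k (χ a) ((run χ σ t a).ket))^2

lemma noswap_ket (t : ℕ)
    (hns : ¬ swapc (run χ σ t (σ t).1) (run χ σ t (σ t).2)) (a : Fin n) :
    (run χ σ (t+1) a).ket = (run χ σ t a).ket := by
  rw [run_succ]
  split_ifs with h1 h2
  · rw [(interact_ket_stay _ _ hns).1, h1]
  · rw [(interact_ket_stay _ _ hns).2, h2]
  · rfl

lemma sum_pair_split {p q : Fin n} (hpq : p ≠ q) (g : Fin n → ℕ) :
    ∑ a, g a = g p + g q + ∑ a ∈ (Finset.univ.erase p).erase q, g a := by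
  rw [← Finset.add_sum_erase _ g (Finset.mem_univ p)]
  rw [← Finset.add_sum_erase _ g (Finset.mem_erase.mpr ⟨Ne.symm hpq, Finset.mem_univ q⟩)]
  ring

lemma swap_step (hk : 0 < k) (t : ℕ) (hpq : (σ t).1 ≠ (σ t).2)
    (hsw : swapc (run χ σ t (σ t).1) (run χ σ t (σ t).2)) :
    (Sw χ σ (t+1) + k = Sw χ σ t) ∨
    (Sw χ σ (t+1) = Sw χ σ t ∧ Qw χ σ t < Qw χ σ (t+1)) := by
  set p := (σ t).1
  set q := (σ t).2
  have hketp : (run χ σ (t+1) p).ket = (run χ σ t q).ket := by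
    rw [run_succ]; rw [if_pos rfl]; exact (interact_ket_swap _ _ hsw).1
  have hketq : (run χ σ (t+1) q).ket = (run χ σ t p).ket := by
    rw [run_succ]; rw [if_neg (Ne.symm hpq), if_pos rfl]; exact (interact_ket_swap _ _ hsw).2
  have hrest : ∀ a ∈ (Finset.univ.erase p).erase q, run χ σ (t+1) a = run χ σ t a := by
    intro a ha
    have h2 := Finset.ne_of_mem_erase ha
    have h1 := Finset.ne_of_mem_erase (Finset.mem_of_mem_erase ha)
    rw [run_succ, if_neg h1, if_neg h2]
  have hcons := swapc_consequence hk (run χ σ t p) (run χ σ t q) hsw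
  rw [run_bra χ σ t p, run_bra χ σ t q] at hcons
  set A := wt k (χ p) ((run χ σ t p).ket) with hA
  set B := wt k (χ q) ((run χ σ t q).ket) with hB
  set A' := wt k (χ p) ((run χ σ t q).ket) with hA'
  set B' := wt k (χ q) ((run χ σ t p).ket) with hB'
  have hSt : Sw χ σ t = A + B + ∑ a ∈ (Finset.univ.erase p).erase q,
      wt k (χ a) ((run χ σ t a).ket) := sum_pair_split hpq _
  have hSt1 : Sw χ σ (t+1) = A' + B' + ∑ a ∈ (Finset.univ.erase p).erase q,
      wt k (χ a) ((run χ σ t a).ket) := by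
    rw [Sw, sum_pair_split hpq]
    rw [hketp, hketq]
    congr 1
    exact Finset.sum_congr rfl fun a ha => by rw [hrest a ha]
  have hQt : Qw χ σ t = A^2 + B^2 + ∑ a ∈ (Finset.univ.erase p).erase q,
      (wt k (χ a) ((run χ σ t a).ket))^2 := sum_pair_split hpq _
  have hQt1 : Qw χ σ (t+1) = A'^2 + B'^2 + ∑ a ∈ (Finset.univ.erase p).erase q,
      (wt k (χ a) ((run χ σ t a).ket))^2 := by
    rw [Qw, sum_pair_split hpq]
    rw [hketp, hketq]
    congr 1
    exact Finset.sum_congr rfl fun a ha => by rw [hrest a ha]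
  rcases hcons with h | ⟨h1, h2⟩
  · left; omega
  · right; omega

lemma noswap_step (t : ℕ)
    (hns : ¬ swapc (run χ σ t (σ t).1) (run χ σ t (σ t).2)) :
    Sw χ σ (t+1) = Sw χ σ t ∧ Qw χ σ (t+1) = Qw χ σ t := by
  constructor <;>
  · refine Finset.sum_congr rfl fun a _ => by rw [noswap_ket χ σ t hns a]

lemma event_const_of_antitone (f : ℕ → ℕ) (h : ∀ t, f (t+1) ≤ f t) :
    ∃ T, ∀ t, T ≤ t → f t = f T := by
  have mono : ∀ s t, s ≤ t → f t ≤ f s := by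
    intro s t hst
    induction t, hst using Nat.le_induction with
    | base => exact le_refl _
    | succ m hm ih => exact le_trans (h m) ih
  obtain ⟨T, hT⟩ : ∃ T, f T = sInf (Set.range f) :=
    Nat.sInf_mem (Set.range_nonempty f)
  refine ⟨T, fun t ht => ?_⟩
  have h1 := mono T t ht
  have h2 : sInf (Set.range f) ≤ f t := Nat.sInf_le ⟨t, rfl⟩
  omega

theorem freeze (hk : 0 < k) (hσ : ∀ t : ℕ, (σ t).1 ≠ (σ t).2) :
    ∃ T0 : ℕ, (∀ t, T0 ≤ t → ∀ a, (run χ σ t a).ket = (run χ σ T0 a).ket) ∧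
      (∀ t, T0 ≤ t → ¬ swapc (run χ σ t (σ t).1) (run χ σ t (σ t).2)) := by
  -- S eventually constant
  have hSle : ∀ t, Sw χ σ (t+1) ≤ Sw χ σ t := by
    intro t
    by_cases hsw : swapc (run χ σ t (σ t).1) (run χ σ t (σ t).2)
    · rcases swap_step χ σ hk t (hσ t) hsw with h | ⟨h, _⟩ <;> omega
    · exact (noswap_step χ σ t hsw).1.le
  obtain ⟨T1, hT1⟩ := event_const_of_antitone _ hSle
  -- beyond T1, Q is monotone
  have hQmono : ∀ t, T1 ≤ t → Qw χ σ t ≤ Qw χ σ (t+1) := by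
    intro t ht
    by_cases hsw : swapc (run χ σ t (σ t).1) (run χ σ t (σ t).2)
    · rcases swap_step χ σ hk t (hσ t) hsw with h | ⟨_, h⟩
      · exfalso
        have e1 := hT1 t ht
        have e2 := hT1 (t+1) (by omega)
        omega
      · exact h.le
    · exact (noswap_step χ σ t hsw).2.ge
  have hQbound : ∀ t, Qw χ σ t ≤ n * (k*k) := by
    intro t
    calc Qw χ σ t ≤ ∑ _a : Fin n, k*k := by
          refine Finset.sum_le_sum fun a _ => ?_
          have := wt_le (χ a) ((run χ σ t a).ket)
          calc (wt k (χ a) ((run χ σ t a).ket))^2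
              = wt k (χ a) ((run χ σ t a).ket) * wt k (χ a) ((run χ σ t a).ket) := sq _
          _ ≤ k * k := Nat.mul_le_mul this this
    _ = n * (k*k) := by simp [Finset.sum_const, Finset.card_univ]
  obtain ⟨T2, hT2⟩ := event_const_of_antitone (fun s => n*(k*k) - Qw χ σ (T1 + s))
    (fun s => by
      show n*(k*k) - Qw χ σ (T1 + (s+1)) ≤ n*(k*k) - Qw χ σ (T1 + s)
      have e : T1 + (s+1) = (T1+s)+1 := by omega
      rw [e]
      have := hQmono (T1+s) (by omega)
      omega)
  set T0 := T1 + T2 with hT0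
  have hQconst : ∀ t, T0 ≤ t → Qw χ σ t = Qw χ σ T0 := by
    intro t ht
    have h1 := hT2 (t - T1) (by omega)
    have h2 := hQbound t
    have h3 := hQbound T0
    have h4 : T1 + (t - T1) = t := by omega
    simp only [h4, ← hT0] at h1
    omega
  have hnoswap : ∀ t, T0 ≤ t → ¬ swapc (run χ σ t (σ t).1) (run χ σ t (σ t).2) := by
    intro t ht hsw
    rcases swap_step χ σ hk t (hσ t) hsw with h | ⟨_, h⟩
    · have e1 := hT1 t (by omega)
      have e2 := hT1 (t+1) (by omega)
      omega
    · have e1 := hQconst t ht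
      have e2 := hQconst (t+1) (by omega)
      omega
  refine ⟨T0, fun t ht => ?_, hnoswap⟩
  induction t, ht using Nat.le_induction with
  | base => intro a; rfl
  | succ m hm ih =>
    intro a
    rw [noswap_ket χ σ m (hnoswap m hm) a]
    exact ih a

end Freeze

section Core
variable {k n : ℕ} [NeZero k]

/-- arc of agent `a` covers color `c` -/
def covers (χ K : Fin n → Fin k) (a : Fin n) (c : Fin k) : Prop :=
  dist (χ a) c < wt k (χ a) (K a)

instance (χ K : Fin n → Fin k) (a : Fin n) (c : Fin k) : Decidable (covers χ K a c) := by
  unfold covers; infer_instance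

variable (χ K : Fin n → Fin k)

/-- number of votes for `c` -/
def Vc (c : Fin k) : ℕ := (Finset.univ.filter fun a => χ a = c).card
/-- coverage of color `c` -/
def cov (c : Fin k) : ℕ := (Finset.univ.filter fun a => covers χ K a c).card
/-- number of arcs crossing the cut between `c` and `c+1` -/
def Xc (c : Fin k) : ℕ :=
  (Finset.univ.filter fun a => covers χ K a c ∧ covers χ K a (c+1)).card
/-- number of diagonal agents of color `c` -/
def Dg (c : Fin k) : ℕ := (Finset.univ.filter fun a => K a = χ a ∧ χ a = c).card

variable {χ K}

lemma covers_of_diag {a : Fin n} (h : K a = χ a) (c : Fin k) : covers χ K a c := by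
  unfold covers
  rw [h, wt_diag]
  exact dist_lt _ _

section withHyp
variable (hk2 : 2 ≤ k)
include hk2

/-- pointwise counting identity for constancy of coverage -/
lemma cov_pointwise (a : Fin n) (c : Fin k) :
    (if covers χ K a (c+1) then 1 else 0) + (if χ a ≠ K a ∧ K a = c+1 then 1 else 0)
      = (if covers χ K a c then 1 else 0) + (if χ a ≠ K a ∧ χ a = c+1 then 1 else 0) := by
  by_cases hd : K a = χ a
  · rw [if_pos (covers_of_diag hd (c+1)), if_pos (covers_of_diag hd c)]
    simp [hd]
  · have hnd : χ a ≠ K a := fun h => hd h.symm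
    have hw : wt k (χ a) (K a) = dist (χ a) (K a) := wt_ne hnd
    have hwpos : 0 < dist (χ a) (K a) := dist_pos hnd
    by_cases he : K a = c + 1
    · -- arc ends exactly at c+1
      have hb : χ a ≠ c + 1 := fun h => hnd (h.trans he.symm)
      have h1 : ¬ covers χ K a (c+1) := by
        unfold covers; rw [hw, ← he]; omega
      have h2 : covers χ K a c := by
        unfold covers
        rw [hw]
        have hws := dist_succ hk2 hb
        rw [← he] at hws
        omega
      have hb' : c + 1 ≠ χ a := fun h => hb h.symm
      simp [h1, h2, hnd, he, hb, hb']
    · by_cases hb : χ a = c + 1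
      · have h1 : covers χ K a (c+1) := by
          unfold covers
          rw [← hb, dist_self]
          exact wt_pos (by omega) _ _
        have h2 : ¬ covers χ K a c := by
          unfold covers
          rw [hw]
          have h3 : dist (χ a) c = k - 1 := by rw [hb]; exact dist_succ_self hk2 c
          have h4 := dist_lt (χ a) (K a)
          omega
        have he' : c + 1 ≠ K a := fun h => he h.symm
        simp [h1, h2, hnd, he, hb, he']
      · have hiff : covers χ K a (c+1) ↔ covers χ K a c := by
          unfold covers
          rw [hw, dist_succ hk2 hb]
          constructor
          · omega
          · intro h
            rcases Nat.lt_or_ge (dist (χ a) c + 1) (dist (χ a) (K a)) with h' | h'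
            · exact h'
            · exfalso
              have heq : dist (χ a) c + 1 = dist (χ a) (K a) := by omega
              rw [← dist_succ hk2 hb] at heq
              exact he (dist_right_inj heq).symm
        have he' : c + 1 ≠ K a := fun h => he h.symm
        have hb' : c + 1 ≠ χ a := fun h => hb h.symm
        by_cases hc : covers χ K a c
        · simp [hc, hiff.mpr hc, he, hb, he', hb']
        · have hc1 : ¬ covers χ K a (c+1) := fun h => hc (hiff.mp h)
          simp [hc, hc1, he, hb, he', hb']

/-- pointwise counting identity for the cut equation -/
lemma cut_pointwise (a : Fin n) (c : Fin k) :
    (if covers χ K a c then 1 else 0) + (if K a = χ a ∧ χ a = c+1 then 1 else 0)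
      = (if covers χ K a c ∧ covers χ K a (c+1) then 1 else 0)
        + (if K a = c+1 then 1 else 0) := by
  by_cases hd : K a = χ a
  · have hc1 := covers_of_diag hd c
    have hc2 := covers_of_diag hd (c+1)
    by_cases h2 : χ a = c + 1
    · simp [hc1, hc2, hd, h2, hd.trans h2]
    · simp [hc1, hc2, hd, h2, fun h => h2 (hd.symm.trans h)]
  · have hnd : χ a ≠ K a := fun h => hd h.symm
    have hw : wt k (χ a) (K a) = dist (χ a) (K a) := wt_ne hnd
    have hwpos : 0 < dist (χ a) (K a) := dist_pos hnd
    by_cases he : K a = c + 1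
    · have hb : χ a ≠ c + 1 := fun h => hnd (h.trans he.symm)
      have h1 : ¬ covers χ K a (c+1) := by
        unfold covers; rw [hw, ← he]; omega
      have h2 : covers χ K a c := by
        unfold covers
        rw [hw]
        have hws := dist_succ hk2 hb
        rw [← he] at hws
        omega
      have hb' : c + 1 ≠ χ a := fun h => hb h.symm
      simp [h1, h2, hd, he, hb, hb']
    · by_cases hb : χ a = c + 1
      · have h2 : ¬ covers χ K a c := by
          unfold covers
          rw [hw]
          have h3 : dist (χ a) c = k - 1 := by rw [hb]; exact dist_succ_self hk2 c
          have h4 := dist_lt (χ a) (K a)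
          omega
        have hb' : c + 1 ≠ K a := fun h => he h.symm
        simp [h2, hd, he, hb', hb]
      · have hiff : covers χ K a (c+1) ↔ covers χ K a c := by
          unfold covers
          rw [hw, dist_succ hk2 hb]
          constructor
          · omega
          · intro h
            rcases Nat.lt_or_ge (dist (χ a) c + 1) (dist (χ a) (K a)) with h' | h'
            · exact h'
            · exfalso
              have heq : dist (χ a) c + 1 = dist (χ a) (K a) := by omega
              rw [← dist_succ hk2 hb] at heq
              exact he (dist_right_inj heq).symm
        have he' : c + 1 ≠ K a := fun h => he h.symm
        by_cases hc : covers χ K a c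
        · simp [hc, hiff.mpr hc, hd, he, he']
        · simp [hc, hd, he, he']

end withHyp
end Core

lemma card_filter_split {α : Type*} [Fintype α] (p q : α → Prop)
    [DecidablePred p] [DecidablePred q] :
    (Finset.univ.filter q).card =
      (Finset.univ.filter fun a => ¬ p a ∧ q a).card
        + (Finset.univ.filter fun a => p a ∧ q a).card := by
  rw [Finset.card_filter, Finset.card_filter, Finset.card_filter, ← Finset.sum_add_distrib]
  refine Finset.sum_congr rfl fun a _ => ?_
  by_cases hp : p a <;> by_cases hq : q a <;> simp [hp, hq]

section CoreCard
variable {k n : ℕ} [NeZero k] {χ K : Fin n → Fin k}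
variable (hk2 : 2 ≤ k)
variable (hperm : ∀ c : Fin k,
  (Finset.univ.filter fun a => K a = c).card = Vc χ c)
include hk2 hperm

lemma cov_succ_eq (c : Fin k) : cov χ K (c+1) = cov χ K c := by
  have h1 : cov χ K (c+1) + (Finset.univ.filter fun a => χ a ≠ K a ∧ K a = c+1).card
      = cov χ K c + (Finset.univ.filter fun a => χ a ≠ K a ∧ χ a = c+1).card := by
    unfold cov
    rw [Finset.card_filter, Finset.card_filter, Finset.card_filter, Finset.card_filter,
      ← Finset.sum_add_distrib, ← Finset.sum_add_distrib]
    exact Finset.sum_congr rfl fun a _ => cov_pointwise hk2 a c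
  have h2 : (Finset.univ.filter fun a => K a = c+1).card =
      (Finset.univ.filter fun a => χ a ≠ K a ∧ K a = c+1).card
        + (Finset.univ.filter fun a => χ a = K a ∧ K a = c+1).card :=
    card_filter_split _ _
  have h3 : Vc χ (c+1) =
      (Finset.univ.filter fun a => χ a ≠ K a ∧ χ a = c+1).card
        + (Finset.univ.filter fun a => χ a = K a ∧ χ a = c+1).card := by
    unfold Vc
    exact card_filter_split _ _
  have h4 : (Finset.univ.filter fun a => χ a = K a ∧ K a = c+1) =
      (Finset.univ.filter fun a => χ a = K a ∧ χ a = c+1) := by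
    apply Finset.filter_congr
    intro a _
    constructor
    · rintro ⟨h5, h6⟩; exact ⟨h5, h5.trans h6⟩
    · rintro ⟨h5, h6⟩; exact ⟨h5, h5.symm.trans h6⟩
  have h5 := hperm (c+1)
  rw [h4] at h2
  omega

open Fin.NatCast in
lemma cov_const (c c' : Fin k) : cov χ K c = cov χ K c' := by
  have key : ∀ j : ℕ, cov χ K ((j : Fin k)) = cov χ K ((0 : Fin k)) := by
    intro j
    induction j with
    | zero => simp
    | succ m ih =>
      have : ((m+1 : ℕ) : Fin k) = ((m : ℕ) : Fin k) + 1 := by push_cast; ring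
      rw [this, cov_succ_eq hk2 hperm, ih]
  have e1 : cov χ K c = cov χ K ((0:Fin k)) := by
    rw [← Fin.cast_val_eq_self c]; exact key c.val
  have e2 : cov χ K c' = cov χ K ((0:Fin k)) := by
    rw [← Fin.cast_val_eq_self c']; exact key c'.val
  rw [e1, e2]

lemma cut_eq (c : Fin k) :
    cov χ K c + Dg χ K (c+1) = Xc χ K c + Vc χ (c+1) := by
  have h1 : cov χ K c + Dg χ K (c+1)
      = Xc χ K c + (Finset.univ.filter fun a => K a = c+1).card := by
    unfold cov Dg Xc
    rw [Finset.card_filter, Finset.card_filter, Finset.card_filter, Finset.card_filter,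
      ← Finset.sum_add_distrib, ← Finset.sum_add_distrib]
    exact Finset.sum_congr rfl fun a _ => cut_pointwise hk2 a c
  rw [h1, hperm (c+1)]

end CoreCard

section CoreStab
variable {k n : ℕ} [NeZero k] {χ K : Fin n → Fin k}
variable (hk2 : 2 ≤ k)
variable (hstab : ∀ a b : Fin n,
  min (wt k (χ a) (K a)) (wt k (χ b) (K b)) ≤ wt k (χ a) (K b))
include hk2 hstab

lemma diag_unique {d d' : Fin n} (hd : K d = χ d) (hd' : K d' = χ d') :
    χ d' = χ d := by
  by_contra hne
  have h := hstab d' d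
  rw [hd, hd', wt_diag, wt_diag, wt_ne hne] at h
  have := dist_lt (χ d') (χ d)
  omega

/-- an agent covering both sides of a cut cannot have its bra at `c+1` -/
lemma cross_bra_ne {a : Fin n} {c : Fin k} (hnd : χ a ≠ K a)
    (hcov : covers χ K a c ∧ covers χ K a (c+1)) : χ a ≠ c + 1 := by
  intro h
  have h2 : dist (χ a) c = k - 1 := by rw [h]; exact dist_succ_self hk2 c
  have h3 := dist_lt (χ a) (K a)
  have h4 := hcov.1
  unfold covers at h4
  rw [wt_ne hnd] at h4
  omega

lemma X_only_diag {d : Fin n} (hd : K d = χ d) {c : Fin k} (hc : c + 1 = χ d)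
    (a : Fin n) (hcov : covers χ K a c ∧ covers χ K a (c+1)) :
    K a = χ a ∧ χ a = c + 1 := by
  by_cases hdg : K a = χ a
  · exact ⟨hdg, by rw [hc]; exact diag_unique hk2 hstab hd hdg⟩
  · exfalso
    have hnd : χ a ≠ K a := fun h => hdg h.symm
    have hb : χ a ≠ c + 1 := cross_bra_ne hk2 hstab hnd hcov
    have hstb := hstab a d
    rw [hd, ← hc, wt_diag] at hstb
    rw [min_eq_left (wt_le (χ a) (K a)), wt_ne hb] at hstb
    have h5 := hcov.2
    unfold covers at h5
    omega

lemma X_empty_ket (hnd : ∀ a : Fin n, χ a ≠ K a) {A : Fin n}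
    (hmax : ∀ a : Fin n, wt k (χ a) (K a) ≤ wt k (χ A) (K A)) {c : Fin k}
    (hc : c + 1 = K A) (a : Fin n)
    (hcov : covers χ K a c ∧ covers χ K a (c+1)) : False := by
  have hb : χ a ≠ c + 1 := cross_bra_ne hk2 hstab (hnd a) hcov
  have hstb := hstab a A
  rw [min_eq_left (hmax a), ← hc, wt_ne hb] at hstb
  have h5 := hcov.2
  unfold covers at h5
  omega

lemma X_empty_bra (hnd : ∀ a : Fin n, χ a ≠ K a) {A : Fin n}
    (hmax : ∀ a : Fin n, wt k (χ a) (K a) ≤ wt k (χ A) (K A)) {c : Fin k}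
    (hc : c + 1 = χ A) (a : Fin n)
    (hcov : covers χ K a c ∧ covers χ K a (c+1)) : False := by
  have hb : χ a ≠ c + 1 := cross_bra_ne hk2 hstab (hnd a) hcov
  have hx : dist (χ a) (c+1) < wt k (χ a) (K a) := hcov.2
  have hwa : wt k (χ a) (K a) = dist (χ a) (K a) := wt_ne (hnd a)
  have hchain : dist (c+1) (K a) = dist (χ a) (K a) - dist (χ a) (c+1) :=
    dist_chain (by omega)
  have hxpos : 0 < dist (χ a) (c+1) := dist_pos hb
  have hkne : (c+1 : Fin k) ≠ K a := by
    intro h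
    rw [h] at hx
    omega
  have hstb := hstab A a
  rw [min_eq_right (hmax a), ← hc, wt_ne hkne] at hstb
  omega

end CoreStab

theorem core_lemma {k n : ℕ} [NeZero k] {χ K : Fin n → Fin k} (hk2 : 2 ≤ k) (hn : 0 < n)
    (hperm : ∀ c : Fin k, (Finset.univ.filter fun a => K a = c).card = Vc χ c)
    (hstab : ∀ a b : Fin n,
      min (wt k (χ a) (K a)) (wt k (χ b) (K b)) ≤ wt k (χ a) (K b))
    (μ : Fin k) (hmaj : ∀ c : Fin k, c ≠ μ → Vc χ c < Vc χ μ) :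
    (∃ d, K d = χ d) ∧ (∀ d, K d = χ d → χ d = μ) := by
  -- general bound : every color's vote count is at most the coverage
  have hVle : ∀ c : Fin k, Vc χ c ≤ cov χ K (c - 1) + Dg χ K c := by
    intro c
    have h := cut_eq hk2 hperm (c - 1)
    rw [sub_add_cancel] at h
    omega
  have part2 : ∀ d, K d = χ d → χ d = μ := by
    intro d hd
    -- votes for colors other than χ d are bounded by coverage
    have hDg0 : ∀ c : Fin k, c ≠ χ d → Dg χ K c = 0 := by
      intro c hcne
      unfold Dg
      rw [Finset.card_eq_zero, Finset.filter_eq_empty_iff]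
      rintro a _ ⟨h1, h2⟩
      exact hcne (h2.symm.trans (diag_unique hk2 hstab hd h1))
    -- X at the cut before c₀ equals the diagonal count
    have hX : Xc χ K (χ d - 1) = Dg χ K (χ d) := by
      unfold Xc Dg
      congr 1
      apply Finset.filter_congr
      intro a _
      constructor
      · intro h
        have := X_only_diag hk2 hstab hd (sub_add_cancel (χ d) 1) a h
        rw [sub_add_cancel] at this
        exact this
      · rintro ⟨h1, _⟩
        exact ⟨covers_of_diag h1 _, covers_of_diag h1 _⟩
    have hVc₀ : Vc χ (χ d) = cov χ K (χ d - 1) := by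
      have h := cut_eq hk2 hperm (χ d - 1)
      rw [sub_add_cancel, hX] at h
      omega
    -- conclude
    by_contra hne
    have h1 := hmaj (χ d) hne
    have h2 : Vc χ μ ≤ cov χ K (μ - 1) := by
      have := hVle μ
      rw [hDg0 μ (Ne.symm hne)] at this
      omega
    rw [cov_const hk2 hperm (μ-1) (χ d - 1), ← hVc₀] at h2
    omega
  refine ⟨?_, part2⟩
  by_contra hex
  push_neg at hex
  have hnd : ∀ a, χ a ≠ K a := fun a h => hex a h.symm
  have huniv : (Finset.univ : Finset (Fin n)).Nonempty := ⟨⟨0, hn⟩, Finset.mem_univ _⟩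
  obtain ⟨A, _, hmaxA⟩ := Finset.exists_max_image Finset.univ
    (fun a => wt k (χ a) (K a)) huniv
  have hmax : ∀ a, wt k (χ a) (K a) ≤ wt k (χ A) (K A) :=
    fun a => hmaxA a (Finset.mem_univ a)
  have hDg0 : ∀ c : Fin k, Dg χ K c = 0 := by
    intro c
    unfold Dg
    rw [Finset.card_eq_zero, Finset.filter_eq_empty_iff]
    rintro a _ ⟨h1, _⟩
    exact hnd a h1.symm
  have hXket : Xc χ K (K A - 1) = 0 := by
    unfold Xc
    rw [Finset.card_eq_zero, Finset.filter_eq_empty_iff]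
    intro a _ h
    exact X_empty_ket hk2 hstab hnd hmax (sub_add_cancel (K A) 1) a h
  have hXbra : Xc χ K (χ A - 1) = 0 := by
    unfold Xc
    rw [Finset.card_eq_zero, Finset.filter_eq_empty_iff]
    intro a _ h
    exact X_empty_bra hk2 hstab hnd hmax (sub_add_cancel (χ A) 1) a h
  have hVket : Vc χ (K A) = cov χ K (K A - 1) := by
    have h := cut_eq hk2 hperm (K A - 1)
    rw [sub_add_cancel, hXket, hDg0] at h
    omega
  have hVbra : Vc χ (χ A) = cov χ K (χ A - 1) := by
    have h := cut_eq hk2 hperm (χ A - 1)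
    rw [sub_add_cancel, hXbra, hDg0] at h
    omega
  have hVμ : Vc χ μ ≤ cov χ K (μ - 1) := by
    have := hVle μ
    rw [hDg0 μ] at this
    omega
  by_cases hμ : χ A = μ
  · have hKμ : K A ≠ μ := fun h => hnd A (hμ.trans h.symm)
    have h1 := hmaj (K A) hKμ
    rw [hVket, cov_const hk2 hperm (K A - 1) (μ - 1)] at h1
    omega
  · have h1 := hmaj (χ A) hμ
    rw [hVbra, cov_const hk2 hperm (χ A - 1) (μ - 1)] at h1
    omega


theorem main_correctness {k n : ℕ} (hk : 1 ≤ k) (hn : 1 ≤ n)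
    (χ : Fin n → Fin k) (μ : Fin k)
    (hmaj : ∀ j : Fin k, j ≠ μ →
      (Finset.univ.filter (fun a => χ a = j)).card <
        (Finset.univ.filter (fun a => χ a = μ)).card)
    (σ : ℕ → Fin n × Fin n)
    (hσ : ∀ t : ℕ, (σ t).1 ≠ (σ t).2)
    (hfair : ∀ p q : Fin n, p ≠ q → ∀ t : ℕ, ∃ t' : ℕ, t ≤ t' ∧ σ t' = (p, q)) :
    ∃ T : ℕ, ∀ t : ℕ, T ≤ t → ∀ a : Fin n, (run χ σ t a).out = μ := by
  -- trivial case k = 1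
  by_cases hk1 : k = 1
  · subst hk1
    exact ⟨0, fun t _ a => Subsingleton.elim _ _⟩
  have hk2 : 2 ≤ k := by omega
  haveI : NeZero k := ⟨by omega⟩
  -- n = 1 contradicts the existence of a schedule
  by_cases hn1 : n = 1
  · subst hn1
    exact absurd (Subsingleton.elim (σ 0).1 (σ 0).2) (hσ 0)
  have hn2 : 2 ≤ n := by omega
  obtain ⟨T0, hfroz, hnoswap⟩ := freeze χ σ (by omega) hσ
  -- permutation invariant
  have hperm : ∀ c : Fin k,
      (Finset.univ.filter fun a => (run χ σ T0 a).ket = c).card = Vc χ c :=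
    fun c => run_ket_count χ σ T0 c
  -- stability
  have hstab : ∀ a b : Fin n,
      min (wt k (χ a) ((run χ σ T0 a).ket)) (wt k (χ b) ((run χ σ T0 b).ket)) ≤
        wt k (χ a) ((run χ σ T0 b).ket) := by
    intro a b
    by_cases hab : a = b
    · subst hab; exact min_le_left _ _
    · obtain ⟨t', ht', hpq⟩ := hfair a b hab T0
      have hp : (σ t').1 = a := by rw [hpq]
      have hq : (σ t').2 = b := by rw [hpq]
      have hns := hnoswap t' ht'
      rw [hp, hq] at hns
      unfold swapc at hns
      rw [run_bra, run_bra, hfroz t' ht' a, hfroz t' ht' b] at hns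
      have h := not_lt.mp hns
      exact le_trans h (min_le_left _ _)
  have hmaj' : ∀ c : Fin k, c ≠ μ → Vc χ c < Vc χ μ := fun c hc => hmaj c hc
  obtain ⟨⟨d, hd⟩, hall⟩ := core_lemma (χ := χ) (K := fun a => (run χ σ T0 a).ket)
    hk2 (by omega) hperm hstab μ hmaj'
  -- diagonal agents (at any time ≥ T0) have bra = μ
  have hdiagμ : ∀ t, T0 ≤ t → ∀ x : Fin n,
      (run χ σ t x).bra = (run χ σ t x).ket → (run χ σ t x).bra = μ := by
    intro t ht x h
    rw [run_bra] at h ⊢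
    rw [hfroz t ht x] at h
    exact hall x h.symm
  -- one step: out either becomes μ or stays
  have hstep : ∀ t, T0 ≤ t → ∀ a : Fin n,
      (run χ σ (t+1) a).out = μ ∨ (run χ σ (t+1) a).out = (run χ σ t a).out := by
    intro t ht a
    have hns := hnoswap t ht
    rw [run_succ]
    split_ifs with h1 h2
    · by_cases hdp : (run χ σ t (σ t).1).bra = (run χ σ t (σ t).1).ket
      · left; rw [interact_stay_diag1 _ _ hns hdp]; exact hdiagμ t ht _ hdp
      · by_cases hdq : (run χ σ t (σ t).2).bra = (run χ σ t (σ t).2).ket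
        · left; rw [interact_stay_diag2 _ _ hns hdp hdq]; exact hdiagμ t ht _ hdq
        · right; rw [interact_stay_nodiag _ _ hns hdp hdq, h1]
    · by_cases hdp : (run χ σ t (σ t).1).bra = (run χ σ t (σ t).1).ket
      · left; rw [interact_stay_diag1 _ _ hns hdp]; exact hdiagμ t ht _ hdp
      · by_cases hdq : (run χ σ t (σ t).2).bra = (run χ σ t (σ t).2).ket
        · left; rw [interact_stay_diag2 _ _ hns hdp hdq]; exact hdiagμ t ht _ hdq
        · right; rw [interact_stay_nodiag _ _ hns hdp hdq, h2]
    · right; rfl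
  -- participants of an interaction with a diagonal agent output μ
  have hhit : ∀ t, T0 ≤ t → ∀ a : Fin n, (a = (σ t).1 ∨ a = (σ t).2) →
      ((run χ σ t (σ t).1).bra = (run χ σ t (σ t).1).ket ∨
       (run χ σ t (σ t).2).bra = (run χ σ t (σ t).2).ket) →
      (run χ σ (t+1) a).out = μ := by
    intro t ht a ha hdg
    have hns := hnoswap t ht
    rw [run_succ]
    by_cases hdp : (run χ σ t (σ t).1).bra = (run χ σ t (σ t).1).ket
    · rw [interact_stay_diag1 _ _ hns hdp]
      rcases ha with h | h
      · rw [if_pos h]; exact hdiagμ t ht _ hdp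
      · by_cases h1 : a = (σ t).1
        · rw [if_pos h1]; exact hdiagμ t ht _ hdp
        · rw [if_neg h1, if_pos h]; exact hdiagμ t ht _ hdp
    · have hdq : (run χ σ t (σ t).2).bra = (run χ σ t (σ t).2).ket := by tauto
      rw [interact_stay_diag2 _ _ hns hdp hdq]
      rcases ha with h | h
      · rw [if_pos h]; exact hdiagμ t ht _ hdq
      · by_cases h1 : a = (σ t).1
        · rw [if_pos h1]; exact hdiagμ t ht _ hdq
        · rw [if_neg h1, if_pos h]; exact hdiagμ t ht _ hdq
  -- d is diagonal at every time ≥ T0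
  have hddiag : ∀ t, T0 ≤ t → (run χ σ t d).bra = (run χ σ t d).ket := by
    intro t ht
    rw [run_bra, hfroz t ht d]
    exact hd.symm
  -- every agent eventually outputs μ
  have hattain : ∀ a : Fin n, ∃ t, T0 ≤ t ∧ (run χ σ t a).out = μ := by
    intro a
    by_cases had : a = d
    · obtain ⟨e, he⟩ : ∃ e : Fin n, e ≠ d := by
        have hdlt := d.isLt
        rcases Nat.lt_or_ge (d.val + 1) n with h' | h'
        · exact ⟨⟨d.val + 1, h'⟩, fun h => by
            have := congrArg Fin.val h; simp at this⟩
        · exact ⟨⟨0, by omega⟩, fun h => by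
            have := congrArg Fin.val h; simp at this; omega⟩
      obtain ⟨t', ht', hpq⟩ := hfair d e (Ne.symm he) T0
      have hp : (σ t').1 = d := by rw [hpq]
      refine ⟨t' + 1, by omega, ?_⟩
      apply hhit t' ht' a (Or.inl (by rw [hp, had]))
      left
      rw [hp]
      exact hddiag t' ht'
    · obtain ⟨t', ht', hpq⟩ := hfair a d had T0
      have hq : (σ t').2 = d := by rw [hpq]
      have hp : (σ t').1 = a := by rw [hpq]
      refine ⟨t' + 1, by omega, ?_⟩
      apply hhit t' ht' a (Or.inl hp.symm)
      right
      rw [hq]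
      exact hddiag t' ht'
  -- outputs stay μ
  have hstay : ∀ a : Fin n, ∀ s t : ℕ, T0 ≤ s → s ≤ t →
      (run χ σ s a).out = μ → (run χ σ t a).out = μ := by
    intro a s t hs hst hout
    induction t, hst using Nat.le_induction with
    | base => exact hout
    | succ m hm ih =>
      rcases hstep m (by omega) a with h | h
      · exact h
      · rw [h]; exact ih
  -- uniform bound
  choose F hF1 hF2 using hattain
  refine ⟨max T0 (Finset.univ.sup F), fun t ht a => ?_⟩
  have h1 : T0 ≤ F a := hF1 a
  have h2 : F a ≤ t := le_trans (le_trans (Finset.le_sup (Finset.mem_univ a))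
    (le_max_right _ _)) ht
  exact hstay a (F a) t h1 h2 (hF2 a)

end PRM


/-- Theorem (Correctness): if the input assignment has a unique relative-majority
color `μ` and the schedule is weakly fair, then all agents eventually output `μ`
forever. -/
theorem prm_correctness {k n : ℕ} (hk : 1 ≤ k) (hn : 1 ≤ n)
    (χ : Fin n → Fin k) (μ : Fin k)
    (hmaj : ∀ j : Fin k, j ≠ μ →
      (Finset.univ.filter (fun a => χ a = j)).card <
        (Finset.univ.filter (fun a => χ a = μ)).card)
    (σ : ℕ → Fin n × Fin n)
    (hσ : ∀ t : ℕ, (σ t).1 ≠ (σ t).2)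
    (hfair : ∀ p q : Fin n, p ≠ q → ∀ t : ℕ, ∃ t' : ℕ, t ≤ t' ∧ σ t' = (p, q)) :
    ∃ T : ℕ, ∀ t : ℕ, T ≤ t → ∀ a : Fin n, (run χ σ t a).out = μ := by
  exact PRM.main_correctness hk hn χ μ hmaj σ hσ hfair
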